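/- Let μ be a σ-finite measure on Ω, let f and g be probability densities with respect to μ, and let (f_i) and (g_i) be sequences of probability densities that ratio-converge in measure to f and g respectively. Then the likelihood-ratio quantile functions c[f_i, g_i] converge to c[f, g] in Lebesgue measure on (0,1): for every ε > 0, the Lebesgue measure of { t ∈ (0,1) : |c[f_i,g_i](t) − c[f,g](t)| > ε } tends to 0 as i → ∞. -/

import Mathlib

open MeasureTheory Filter Set Topology

namespace LRQ

variable {Ω : Type*} [MeasurableSpace Ω] {μ : Measure Ω}

lemma integrable_one (g : Ω → ℝ) (h : ∫ x, g x ∂μ = 1) : Integrable g μ := by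
  by_contra hc
  rw [integral_undef hc] at h
  norm_num at h

/-- the cdf of the likelihood ratio -/
noncomputable def cdf (μ : Measure Ω) (f g : Ω → ℝ) (r : ℝ) : ℝ :=
  ∫ x in {x | f x / g x < r}, g x ∂μ

lemma lrq_eq (f g : Ω → ℝ) (t : ℝ) :
    sSup {r : ℝ | 0 ≤ r ∧ cdf μ f g r < t}
      = sSup {r : ℝ | 0 ≤ r ∧ ∫ x in {x | f x / g x < r}, g x ∂μ < t} := rfl

section basic

variable {f g : Ω → ℝ}

lemma measSet (hf : Measurable f) (hg : Measurable g) (r : ℝ) :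
    MeasurableSet {x | f x / g x < r} :=
  measurableSet_lt (hf.div hg) measurable_const

lemma cdf_mono (hf : Measurable f) (hg : Measurable g) (hgpos : ∀ᵐ x ∂μ, 0 < g x)
    (hgint : ∫ x, g x ∂μ = 1) {r r' : ℝ} (h : r ≤ r') :
    cdf μ f g r ≤ cdf μ f g r' := by
  apply setIntegral_mono_set ((integrable_one g hgint).integrableOn)
  · exact ae_restrict_of_ae (hgpos.mono fun x hx => hx.le)
  · exact Filter.Eventually.of_forall fun x hx => lt_of_lt_of_le hx h

lemma cdf_nonneg (hgpos : ∀ᵐ x ∂μ, 0 < g x) (r : ℝ) : 0 ≤ cdf μ f g r :=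
  setIntegral_nonneg_of_ae_restrict (ae_restrict_of_ae <| hgpos.mono fun _ hx => hx.le)

lemma cdf_le_one (hgpos : ∀ᵐ x ∂μ, 0 < g x) (hgint : ∫ x, g x ∂μ = 1) (r : ℝ) :
    cdf μ f g r ≤ 1 := by
  rw [← hgint]
  exact setIntegral_le_integral (integrable_one g hgint) (hgpos.mono fun _ hx => hx.le)

lemma cdf_zero (hfpos : ∀ᵐ x ∂μ, 0 < f x) (hgpos : ∀ᵐ x ∂μ, 0 < g x) :
    cdf μ f g 0 = 0 := by
  have hnull : μ {x | f x / g x < 0} = 0 := by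
    have h : ∀ᵐ x ∂μ, ¬ (f x / g x < 0) := by
      filter_upwards [hfpos, hgpos] with x hx hy
      exact not_lt.2 (div_nonneg hx.le hy.le)
    simpa [ae_iff] using h
  unfold cdf
  rw [Measure.restrict_eq_zero.2 hnull, integral_zero_measure]

lemma cdf_tendsto (hf : Measurable f) (hg : Measurable g)
    (hgint : ∫ x, g x ∂μ = 1) :
    Tendsto (fun n : ℕ => cdf μ f g n) atTop (𝓝 1) := by
  have hU : (⋃ n : ℕ, {x | f x / g x < (n : ℝ)}) = univ := by
    ext x
    simp only [mem_iUnion, mem_univ, iff_true, mem_setOf_eq]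
    exact exists_nat_gt _
  have := tendsto_setIntegral_of_monotone (μ := μ) (f := g)
    (s := fun n : ℕ => {x | f x / g x < (n : ℝ)})
    (fun n => measSet hf hg _)
    (fun n m hnm x hx => show f x / g x < (m:ℝ) from lt_of_lt_of_le hx (Nat.cast_le.2 hnm))
    (by rw [hU]; exact (integrable_one g hgint).integrableOn)
  rw [hU] at this
  simpa [hgint, cdf] using this

lemma exists_cdf_gt (hf : Measurable f) (hg : Measurable g)
    (hgint : ∫ x, g x ∂μ = 1) {t : ℝ} (ht : t < 1) :
    ∃ R : ℝ, 0 ≤ R ∧ t < cdf μ f g R := by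
  have := (cdf_tendsto hf hg hgint (μ := μ)).eventually (eventually_gt_nhds ht)
  rcases this.exists with ⟨n, hn⟩
  exact ⟨n, Nat.cast_nonneg n, hn⟩

end basic

end LRQ
namespace LRQ

variable {Ω : Type*} [MeasurableSpace Ω] {μ : Measure Ω}

/-- the set whose sup is the quantile -/
def qset (μ : Measure Ω) (f g : Ω → ℝ) (t : ℝ) : Set ℝ :=
  {r : ℝ | 0 ≤ r ∧ cdf μ f g r < t}

noncomputable def qf (μ : Measure Ω) (f g : Ω → ℝ) (t : ℝ) : ℝ := sSup (qset μ f g t)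

section quant

variable {f g : Ω → ℝ}

lemma zero_mem_qset (hfpos : ∀ᵐ x ∂μ, 0 < f x) (hgpos : ∀ᵐ x ∂μ, 0 < g x) {t : ℝ}
    (ht : 0 < t) : (0:ℝ) ∈ qset μ f g t := by
  refine ⟨le_refl 0, ?_⟩
  rw [cdf_zero hfpos hgpos]; exact ht

lemma bddAbove_qset (hf : Measurable f) (hg : Measurable g) (hgpos : ∀ᵐ x ∂μ, 0 < g x)
    (hgint : ∫ x, g x ∂μ = 1) {t : ℝ} (ht : t < 1) : BddAbove (qset μ f g t) := by
  obtain ⟨R, hR0, hR⟩ := exists_cdf_gt hf hg hgint ht (μ := μ)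
  refine ⟨R, fun r hr => ?_⟩
  by_contra hc
  push_neg at hc
  exact absurd (lt_of_le_of_lt (cdf_mono hf hg hgpos hgint hc.le) hr.2) (not_lt.2 hR.le)

lemma mem_le_qf (hf : Measurable f) (hg : Measurable g) (hgpos : ∀ᵐ x ∂μ, 0 < g x)
    (hgint : ∫ x, g x ∂μ = 1) {t r : ℝ} (ht : t < 1) (hr : r ∈ qset μ f g t) :
    r ≤ qf μ f g t :=
  le_csSup (bddAbove_qset hf hg hgpos hgint ht) hr

lemma qf_nonneg (hf : Measurable f) (hg : Measurable g) (hfpos : ∀ᵐ x ∂μ, 0 < f x)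
    (hgpos : ∀ᵐ x ∂μ, 0 < g x) (hgint : ∫ x, g x ∂μ = 1) {t : ℝ}
    (ht0 : 0 < t) (ht1 : t < 1) : 0 ≤ qf μ f g t :=
  mem_le_qf hf hg hgpos hgint ht1 (zero_mem_qset hfpos hgpos ht0)

lemma qf_le {t M : ℝ} (h : ∀ r ∈ qset μ f g t, r ≤ M) (hM : 0 ≤ M) : qf μ f g t ≤ M :=
  Real.sSup_le h hM

lemma qf_monoOn (hf : Measurable f) (hg : Measurable g) (hfpos : ∀ᵐ x ∂μ, 0 < f x)
    (hgpos : ∀ᵐ x ∂μ, 0 < g x) (hgint : ∫ x, g x ∂μ = 1) :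
    MonotoneOn (qf μ f g) (Ioo (0:ℝ) 1) := by
  intro t ht t' ht' htt'
  refine qf_le (fun r hr => mem_le_qf hf hg hgpos hgint ht'.2 ⟨hr.1, lt_of_lt_of_le hr.2 htt'⟩)
    (qf_nonneg hf hg hfpos hgpos hgint ht'.1 ht'.2)

end quant

end LRQ
namespace LRQ

variable {Ω : Type*} [MeasurableSpace Ω] {μ : Measure Ω}

lemma setIntegral_union_le {g : Ω → ℝ} {A B : Set Ω} (hA : MeasurableSet A)
    (hB : MeasurableSet B) (hg : Integrable g μ) (hgnn : ∀ᵐ x ∂μ, 0 ≤ g x) :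
    ∫ x in A ∪ B, g x ∂μ ≤ ∫ x in A, g x ∂μ + ∫ x in B, g x ∂μ := by
  rw [← Set.union_diff_self,
    setIntegral_union disjoint_sdiff_self_right (hB.diff hA) hg.integrableOn hg.integrableOn]
  refine add_le_add le_rfl ?_
  exact setIntegral_mono_set hg.integrableOn (ae_restrict_of_ae hgnn)
    (Filter.Eventually.of_forall fun x hx => hx.1)

/-- absolute continuity: if `∫_{A i} f → 0` then `∫_{A i} g → 0`, for `f > 0` a.e. -/
lemma tendsto_setIntegral_zero_of_ac {f g : Ω → ℝ} (hfm : Measurable f) (hgm : Measurable g)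
    (hfpos : ∀ᵐ x ∂μ, 0 < f x) (hgnn : ∀ᵐ x ∂μ, 0 ≤ g x)
    (hfi : Integrable f μ) (hgi : Integrable g μ)
    {A : ℕ → Set Ω} (hA : ∀ i, MeasurableSet (A i))
    (h : Tendsto (fun i => ∫ x in A i, f x ∂μ) atTop (𝓝 0)) :
    Tendsto (fun i => ∫ x in A i, g x ∂μ) atTop (𝓝 0) := by
  have hBmeas : ∀ n : ℕ, MeasurableSet {x | (n:ℝ) * f x < g x} :=
    fun n => measurableSet_lt ((measurable_const (a := (n:ℝ))).mul hfm) hgm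
  -- the cutoff integrals tend to 0
  have hcut : Tendsto (fun n : ℕ => ∫ x in {x | (n:ℝ) * f x < g x}, g x ∂μ) atTop (𝓝 0) := by
    have : Tendsto (fun n : ℕ => ∫ x, Set.indicator {x | (n:ℝ) * f x < g x} g x ∂μ)
        atTop (𝓝 (∫ x, (0:ℝ) ∂μ)) := by
      apply tendsto_integral_of_dominated_convergence (fun x => |g x|)
      · exact fun n => (hgm.indicator (hBmeas n)).aestronglyMeasurable
      · exact hgi.abs
      · intro n
        exact Filter.Eventually.of_forall fun x => by
          simpa using norm_indicator_le_norm_self g x (s := {x | (n:ℝ) * f x < g x})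
      · filter_upwards [hfpos] with x hx
        have : ∀ᶠ n : ℕ in atTop, Set.indicator {x | (n:ℝ) * f x < g x} g x = 0 := by
          obtain ⟨N, hN⟩ := exists_nat_gt (g x / f x)
          filter_upwards [eventually_ge_atTop N] with n hn
          apply Set.indicator_of_notMem
          simp only [Set.mem_setOf_eq, not_lt]
          calc g x = (g x / f x) * f x := by field_simp
          _ ≤ (N:ℝ) * f x := mul_le_mul_of_nonneg_right hN.le hx.le
          _ ≤ (n:ℝ) * f x := mul_le_mul_of_nonneg_right (Nat.cast_le.2 hn) hx.le
        exact (tendsto_const_nhds).congr' (this.mono fun n hn => hn.symm)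
    simp only [integral_zero] at this
    refine this.congr fun n => ?_
    rw [integral_indicator (hBmeas n)]
  rw [NormedAddCommGroup.tendsto_nhds_zero] at h ⊢
  intro ε hε
  obtain ⟨n, hn⟩ := (hcut.eventually (eventually_lt_nhds (show (0:ℝ) < ε/2 by linarith))).exists
  filter_upwards [h (ε / (2 * (n+1))) (by positivity)] with i hi
  have hAf : ∫ x in A i, f x ∂μ ≤ ε / (2 * (n+1)) := (le_abs_self _).trans hi.le
  have hsplit : ∫ x in A i, g x ∂μ
      = (∫ x in A i ∩ {x | (n:ℝ) * f x < g x}, g x ∂μ)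
        + ∫ x in A i \ {x | (n:ℝ) * f x < g x}, g x ∂μ :=
    (integral_inter_add_diff (hBmeas n) hgi.integrableOn).symm
  have h1 : ∫ x in A i ∩ {x | (n:ℝ) * f x < g x}, g x ∂μ
      ≤ ∫ x in {x | (n:ℝ) * f x < g x}, g x ∂μ :=
    setIntegral_mono_set hgi.integrableOn (ae_restrict_of_ae hgnn)
      (Filter.Eventually.of_forall fun x hx => hx.2)
  have h2 : ∫ x in A i \ {x | (n:ℝ) * f x < g x}, g x ∂μ
      ≤ ∫ x in A i \ {x | (n:ℝ) * f x < g x}, (n:ℝ) * f x ∂μ := by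
    apply setIntegral_mono_on hgi.integrableOn ((hfi.const_mul _).integrableOn)
      ((hA i).diff (hBmeas n))
    intro x hx
    simpa using hx.2
  have h3 : ∫ x in A i \ {x | (n:ℝ) * f x < g x}, (n:ℝ) * f x ∂μ
      ≤ (n:ℝ) * ∫ x in A i, f x ∂μ := by
    rw [integral_const_mul]
    refine mul_le_mul_of_nonneg_left ?_ (Nat.cast_nonneg n)
    exact setIntegral_mono_set hfi.integrableOn
      (ae_restrict_of_ae (hfpos.mono fun x hx => hx.le))
      (Filter.Eventually.of_forall fun x hx => hx.1)
  have hnn : 0 ≤ ∫ x in A i, g x ∂μ :=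
    setIntegral_nonneg_of_ae_restrict (ae_restrict_of_ae hgnn)
  rw [Real.norm_of_nonneg hnn]
  have harith : (n:ℝ) * (ε / (2 * (n+1))) < ε / 2 := by
    rw [mul_div_assoc', div_lt_div_iff₀ (by positivity) two_pos]
    nlinarith [hε]
  calc ∫ x in A i, g x ∂μ ≤ ε/2 + (n:ℝ) * ∫ x in A i, f x ∂μ := by
        rw [hsplit]; exact add_le_add (h1.trans hn.le) (h2.trans h3)
  _ ≤ ε/2 + (n:ℝ) * (ε / (2 * (n+1))) := by
        have := mul_le_mul_of_nonneg_left hAf (Nat.cast_nonneg n : (0:ℝ) ≤ n)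
        linarith
  _ < ε := by linarith

end LRQ
namespace LRQ

variable {Ω : Type*} [MeasurableSpace Ω] {μ : Measure Ω}

section sandwich

variable {f g F G : Ω → ℝ} {η r : ℝ}

/-- bounds on `F, G` outside the bad set -/
lemma good_bounds (hfpos : ∀ᵐ x ∂μ, 0 < f x) (hgpos : ∀ᵐ x ∂μ, 0 < g x) :
    ∀ᵐ x ∂μ, x ∉ ({x | η < |F x / f x - 1|} ∪ {x | η < |G x / g x - 1|}) →
      ((1-η) * f x ≤ F x ∧ F x ≤ (1+η) * f x ∧ (1-η) * g x ≤ G x ∧ G x ≤ (1+η) * g x) := by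
  filter_upwards [hfpos, hgpos] with x hf0 hg0 hx
  simp only [Set.mem_union, Set.mem_setOf_eq, not_or, not_lt] at hx
  obtain ⟨h1, h2⟩ := hx
  obtain ⟨h1a, h1b⟩ := abs_le.1 h1
  obtain ⟨h2a, h2b⟩ := abs_le.1 h2
  refine ⟨(le_div_iff₀ hf0).1 (by linarith), (div_le_iff₀ hf0).1 (by linarith),
    (le_div_iff₀ hg0).1 (by linarith), (div_le_iff₀ hg0).1 (by linarith)⟩

lemma badset_meas (hf : Measurable f) (hF : Measurable F) :
    MeasurableSet {x | η < |F x / f x - 1|} :=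
  measurableSet_lt measurable_const (((hF.div hf).sub measurable_const).abs)

lemma sandwich_upper (hη0 : 0 < η) (hη1 : η < 1)
    (hf : Measurable f) (hg : Measurable g) (hF : Measurable F) (hG : Measurable G)
    (hfpos : ∀ᵐ x ∂μ, 0 < f x) (hgpos : ∀ᵐ x ∂μ, 0 < g x)
    (hFpos : ∀ᵐ x ∂μ, 0 < F x) (hGpos : ∀ᵐ x ∂μ, 0 < G x)
    (hgint : ∫ x, g x ∂μ = 1) (hGint : ∫ x, G x ∂μ = 1) (r : ℝ) :
    cdf μ F G r ≤ (1+η) * cdf μ f g ((1+η)/(1-η) * r)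
      + ∫ x in ({x | η < |F x / f x - 1|} ∪ {x | η < |G x / g x - 1|}), G x ∂μ := by
  set B : Set Ω := {x | η < |F x / f x - 1|} ∪ {x | η < |G x / g x - 1|} with hBdef
  have hBmeas : MeasurableSet B := (badset_meas hf hF).union (badset_meas hg hG)
  set E : Set Ω := {x | F x / G x < r} with hEdef
  have hEmeas : MeasurableSet E := measSet hF hG r
  have hGi : Integrable G μ := integrable_one G hGint
  have hgi : Integrable g μ := integrable_one g hgint
  have hGnn : ∀ᵐ x ∂μ, 0 ≤ G x := hGpos.mono fun x h => h.le
  have hgnn : ∀ᵐ x ∂μ, 0 ≤ g x := hgpos.mono fun x h => h.le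
  have hsplit : cdf μ F G r = (∫ x in E ∩ Bᶜ, G x ∂μ) + ∫ x in E \ Bᶜ, G x ∂μ :=
    (integral_inter_add_diff hBmeas.compl hGi.integrableOn).symm
  have h2 : ∫ x in E \ Bᶜ, G x ∂μ ≤ ∫ x in B, G x ∂μ :=
    setIntegral_mono_set hGi.integrableOn (ae_restrict_of_ae hGnn)
      (Filter.Eventually.of_forall fun x hx => not_not.1 hx.2)
  have h1a : ∫ x in E ∩ Bᶜ, G x ∂μ ≤ ∫ x in E ∩ Bᶜ, (1+η) * g x ∂μ := by
    apply setIntegral_mono_ae_restrict hGi.integrableOn ((hgi.const_mul _).integrableOn)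
    rw [Filter.EventuallyLE, ae_restrict_iff' (hEmeas.inter hBmeas.compl)]
    filter_upwards [good_bounds hfpos hgpos (η := η) (F := F) (G := G)] with x hgb hx
    exact (hgb hx.2).2.2.2
  have h1b : ∫ x in E ∩ Bᶜ, g x ∂μ ≤ cdf μ f g ((1+η)/(1-η) * r) := by
    apply setIntegral_mono_set hgi.integrableOn (ae_restrict_of_ae hgnn)
    filter_upwards [good_bounds hfpos hgpos (η := η) (F := F) (G := G),
      hfpos, hgpos, hFpos, hGpos] with x hgb hf0 hg0 hF0 hG0 hx
    obtain ⟨hxE, hxB⟩ := hx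
    obtain ⟨hb1, hb2, hb3, hb4⟩ := hgb hxB
    have hFG : F x < r * G x := (div_lt_iff₀ hG0).1 hxE
    have hr0 : 0 < r := by nlinarith
    show f x / g x < (1+η)/(1-η) * r
    rw [div_lt_iff₀ hg0]
    have c1 : f x * (1-η) ≤ F x := by linarith
    have c2 : r * G x ≤ r * ((1+η) * g x) := by nlinarith
    rw [div_mul_eq_mul_div, div_mul_eq_mul_div, lt_div_iff₀ (by linarith : (0:ℝ) < 1-η)]
    nlinarith
  calc cdf μ F G r ≤ (∫ x in E ∩ Bᶜ, (1+η) * g x ∂μ) + ∫ x in B, G x ∂μ := by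
        rw [hsplit]; exact add_le_add h1a h2
    _ ≤ (1+η) * cdf μ f g ((1+η)/(1-η) * r) + ∫ x in B, G x ∂μ := by
        rw [integral_const_mul]
        have := mul_le_mul_of_nonneg_left h1b (by linarith : (0:ℝ) ≤ 1+η)
        linarith

end sandwich

end LRQ
namespace LRQ

variable {Ω : Type*} [MeasurableSpace Ω] {μ : Measure Ω}

section sandwich2

variable {f g F G : Ω → ℝ} {η r : ℝ}

lemma sandwich_lower (hη0 : 0 < η) (hη1 : η < 1)
    (hf : Measurable f) (hg : Measurable g) (hF : Measurable F) (hG : Measurable G)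
    (hfpos : ∀ᵐ x ∂μ, 0 < f x) (hgpos : ∀ᵐ x ∂μ, 0 < g x)
    (hFpos : ∀ᵐ x ∂μ, 0 < F x) (hGpos : ∀ᵐ x ∂μ, 0 < G x)
    (hgint : ∫ x, g x ∂μ = 1) (hGint : ∫ x, G x ∂μ = 1) (r : ℝ) :
    (1-η) * (cdf μ f g ((1-η)/(1+η) * r)
        - ∫ x in ({x | η < |F x / f x - 1|} ∪ {x | η < |G x / g x - 1|}), g x ∂μ)
      ≤ cdf μ F G r := by
  set B : Set Ω := {x | η < |F x / f x - 1|} ∪ {x | η < |G x / g x - 1|} with hBdef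
  have hBmeas : MeasurableSet B := (badset_meas hf hF).union (badset_meas hg hG)
  set E : Set Ω := {x | F x / G x < r} with hEdef
  set D : Set Ω := {x | f x / g x < (1-η)/(1+η) * r} with hDdef
  have hEmeas : MeasurableSet E := measSet hF hG r
  have hDmeas : MeasurableSet D := measSet hf hg _
  have hGi : Integrable G μ := integrable_one G hGint
  have hgi : Integrable g μ := integrable_one g hgint
  have hGnn : ∀ᵐ x ∂μ, 0 ≤ G x := hGpos.mono fun x h => h.le
  have hgnn : ∀ᵐ x ∂μ, 0 ≤ g x := hgpos.mono fun x h => h.le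
  -- ∫_D g ≤ ∫_{D∩Bᶜ} g + ∫_B g
  have hsplit : cdf μ f g ((1-η)/(1+η) * r)
      = (∫ x in D ∩ Bᶜ, g x ∂μ) + ∫ x in D \ Bᶜ, g x ∂μ :=
    (integral_inter_add_diff hBmeas.compl hgi.integrableOn).symm
  have h2 : ∫ x in D \ Bᶜ, g x ∂μ ≤ ∫ x in B, g x ∂μ :=
    setIntegral_mono_set hgi.integrableOn (ae_restrict_of_ae hgnn)
      (Filter.Eventually.of_forall fun x hx => not_not.1 hx.2)
  -- (1-η) ∫_{D∩Bᶜ} g ≤ ∫_{D∩Bᶜ} G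
  have h1a : ∫ x in D ∩ Bᶜ, (1-η) * g x ∂μ ≤ ∫ x in D ∩ Bᶜ, G x ∂μ := by
    apply setIntegral_mono_ae_restrict ((hgi.const_mul _).integrableOn) hGi.integrableOn
    rw [Filter.EventuallyLE, ae_restrict_iff' (hDmeas.inter hBmeas.compl)]
    filter_upwards [good_bounds hfpos hgpos (η := η) (F := F) (G := G)] with x hgb hx
    exact (hgb hx.2).2.2.1
  -- ∫_{D∩Bᶜ} G ≤ cdf μ F G r
  have h1b : ∫ x in D ∩ Bᶜ, G x ∂μ ≤ cdf μ F G r := by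
    apply setIntegral_mono_set hGi.integrableOn (ae_restrict_of_ae hGnn)
    filter_upwards [good_bounds hfpos hgpos (η := η) (F := F) (G := G),
      hfpos, hgpos, hFpos, hGpos] with x hgb hf0 hg0 hF0 hG0 hx
    obtain ⟨hxD, hxB⟩ := hx
    obtain ⟨hb1, hb2, hb3, hb4⟩ := hgb hxB
    have hfg : f x * (1+η) < (1-η) * r * g x := by
      have := (div_lt_iff₀ hg0).1 hxD
      rw [div_mul_eq_mul_div, div_mul_eq_mul_div] at this
      have := (lt_div_iff₀ (by linarith : (0:ℝ) < 1+η)).1 this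
      linarith
    show F x / G x < r
    rw [div_lt_iff₀ hG0]
    -- F ≤ (1+η) f, (1-η) g ≤ G, f(1+η) < (1-η) r g
    have hr0 : 0 < r := by
      by_contra hc
      push_neg at hc
      nlinarith [mul_nonneg (mul_nonneg (show (0:ℝ) ≤ 1-η by linarith)
        (neg_nonneg.2 hc)) hg0.le, mul_pos hf0 (show (0:ℝ) < 1+η by linarith)]
    nlinarith [mul_le_mul_of_nonneg_left hb3 hr0.le]
  have h3 : cdf μ f g ((1-η)/(1+η) * r) - (∫ x in B, g x ∂μ) ≤ ∫ x in D ∩ Bᶜ, g x ∂μ := by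
    linarith
  calc (1-η) * (cdf μ f g ((1-η)/(1+η) * r) - ∫ x in B, g x ∂μ)
      ≤ (1-η) * ∫ x in D ∩ Bᶜ, g x ∂μ := mul_le_mul_of_nonneg_left h3 (by linarith)
    _ = ∫ x in D ∩ Bᶜ, (1-η) * g x ∂μ := (integral_const_mul _ _).symm
    _ ≤ ∫ x in D ∩ Bᶜ, G x ∂μ := h1a
    _ ≤ cdf μ F G r := h1b

end sandwich2

end LRQ
namespace LRQ

variable {Ω : Type*} [MeasurableSpace Ω] {μ : Measure Ω}

section beta

variable {f g F G : Ω → ℝ} {η : ℝ}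

lemma beta_bound (hη0 : 0 < η) (hη1 : η < 1)
    (hf : Measurable f) (hg : Measurable g) (hF : Measurable F) (hG : Measurable G)
    (hgpos : ∀ᵐ x ∂μ, 0 < g x) (hGpos : ∀ᵐ x ∂μ, 0 < G x)
    (hgint : ∫ x, g x ∂μ = 1) (hGint : ∫ x, G x ∂μ = 1) :
    ∫ x in ({x | η < |F x / f x - 1|} ∪ {x | η < |G x / g x - 1|}), G x ∂μ
      ≤ (1+η) * (∫ x in ({x | η < |F x / f x - 1|} ∪ {x | η < |G x / g x - 1|}), g x ∂μ)
        + η + ∫ x in {x | η < |G x / g x - 1|}, g x ∂μ := by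
  set Bg : Set Ω := {x | η < |G x / g x - 1|} with hBgdef
  set B : Set Ω := {x | η < |F x / f x - 1|} ∪ Bg with hBdef
  have hBgmeas : MeasurableSet Bg := badset_meas hg hG
  have hBmeas : MeasurableSet B := (badset_meas hf hF).union hBgmeas
  have hGi : Integrable G μ := integrable_one G hGint
  have hgi : Integrable g μ := integrable_one g hgint
  have hGnn : ∀ᵐ x ∂μ, 0 ≤ G x := hGpos.mono fun x h => h.le
  have hgnn : ∀ᵐ x ∂μ, 0 ≤ g x := hgpos.mono fun x h => h.le
  -- a.e. bounds on the complement of Bg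
  have hae : ∀ᵐ x ∂μ, x ∉ Bg → ((1-η) * g x ≤ G x ∧ G x ≤ (1+η) * g x) := by
    filter_upwards [hgpos] with x hg0 hx
    simp only [hBgdef, Set.mem_setOf_eq, not_lt] at hx
    obtain ⟨h2a, h2b⟩ := abs_le.1 hx
    exact ⟨(le_div_iff₀ hg0).1 (by linarith), (div_le_iff₀ hg0).1 (by linarith)⟩
  have hsplit : ∫ x in B, G x ∂μ = (∫ x in B ∩ Bgᶜ, G x ∂μ) + ∫ x in B \ Bgᶜ, G x ∂μ :=
    (integral_inter_add_diff hBgmeas.compl hGi.integrableOn).symm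
  have h1 : ∫ x in B ∩ Bgᶜ, G x ∂μ ≤ (1+η) * ∫ x in B, g x ∂μ := by
    have step1 : ∫ x in B ∩ Bgᶜ, G x ∂μ ≤ ∫ x in B ∩ Bgᶜ, (1+η) * g x ∂μ := by
      apply setIntegral_mono_ae_restrict hGi.integrableOn ((hgi.const_mul _).integrableOn)
      rw [Filter.EventuallyLE, ae_restrict_iff' (hBmeas.inter hBgmeas.compl)]
      filter_upwards [hae] with x hx hmem
      exact (hx hmem.2).2
    have step2 : ∫ x in B ∩ Bgᶜ, g x ∂μ ≤ ∫ x in B, g x ∂μ :=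
      setIntegral_mono_set hgi.integrableOn (ae_restrict_of_ae hgnn)
        (Filter.Eventually.of_forall fun x hx => hx.1)
    rw [integral_const_mul] at step1
    have := mul_le_mul_of_nonneg_left step2 (by linarith : (0:ℝ) ≤ 1+η)
    linarith
  have h2 : ∫ x in B \ Bgᶜ, G x ∂μ ≤ ∫ x in Bg, G x ∂μ :=
    setIntegral_mono_set hGi.integrableOn (ae_restrict_of_ae hGnn)
      (Filter.Eventually.of_forall fun x hx => not_not.1 hx.2)
  -- bound ∫_{Bg} G using total mass
  have hb0 : 0 ≤ ∫ x in Bg, g x ∂μ :=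
    setIntegral_nonneg_of_ae_restrict (ae_restrict_of_ae hgnn)
  have hcomplG : (∫ x in Bg, G x ∂μ) + ∫ x in Bgᶜ, G x ∂μ = 1 := by
    rw [integral_add_compl hBgmeas hGi, hGint]
  have hcomplg : (∫ x in Bg, g x ∂μ) + ∫ x in Bgᶜ, g x ∂μ = 1 := by
    rw [integral_add_compl hBgmeas hgi, hgint]
  have h3 : ∫ x in Bgᶜ, (1-η) * g x ∂μ ≤ ∫ x in Bgᶜ, G x ∂μ := by
    apply setIntegral_mono_ae_restrict ((hgi.const_mul _).integrableOn) hGi.integrableOn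
    rw [Filter.EventuallyLE, ae_restrict_iff' hBgmeas.compl]
    filter_upwards [hae] with x hx hmem
    exact (hx hmem).1
  rw [integral_const_mul] at h3
  have h4 : ∫ x in Bg, G x ∂μ ≤ η + ∫ x in Bg, g x ∂μ := by nlinarith
  linarith

end beta

end LRQ
namespace LRQ

variable {Ω : Type*} [MeasurableSpace Ω] {μ : Measure Ω}

set_option maxHeartbeats 1000000 in
/-- Pointwise convergence of the quantile functions at continuity points. -/
lemma qf_tendsto {f g : Ω → ℝ} {fi gi : ℕ → Ω → ℝ}
    (hfmeas : Measurable f) (hfpos : ∀ᵐ x ∂μ, 0 < f x) (hfint : ∫ x, f x ∂μ = 1)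
    (hgmeas : Measurable g) (hgpos : ∀ᵐ x ∂μ, 0 < g x) (hgint : ∫ x, g x ∂μ = 1)
    (hfimeas : ∀ i, Measurable (fi i)) (hfipos : ∀ i, ∀ᵐ x ∂μ, 0 < fi i x)
    (hfiint : ∀ i, ∫ x, fi i x ∂μ = 1)
    (hgimeas : ∀ i, Measurable (gi i)) (hgipos : ∀ i, ∀ᵐ x ∂μ, 0 < gi i x)
    (hgiint : ∀ i, ∫ x, gi i x ∂μ = 1)
    (hfconv : ∀ ε > (0:ℝ),
      Tendsto (fun i => ∫ x in {x | ε < |fi i x / f x - 1|}, f x ∂μ) atTop (𝓝 0))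
    (hgconv : ∀ ε > (0:ℝ),
      Tendsto (fun i => ∫ x in {x | ε < |gi i x / g x - 1|}, g x ∂μ) atTop (𝓝 0))
    {t : ℝ} (ht : t ∈ Ioo (0:ℝ) 1) (hcont : ContinuousAt (qf μ f g) t) :
    Tendsto (fun i => qf μ (fi i) (gi i) t) atTop (𝓝 (qf μ f g t)) := by
  obtain ⟨ht0, ht1⟩ := ht
  rw [Metric.tendsto_nhds]
  intro ε hε
  set ε' := ε/2 with hε'def
  have hε' : 0 < ε' := by positivity
  set M := qf μ f g t with hMdef
  have hM0 : 0 ≤ M := qf_nonneg hfmeas hgmeas hfpos hgpos hgint ht0 ht1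
  clear_value ε' M
  -- choose δ from continuity
  obtain ⟨δ₀, hδ₀, hδ₀c⟩ := Metric.continuousAt_iff.1 hcont (ε'/2) (by positivity)
  set δ := min (δ₀/2) (min (t/2) ((1-t)/2)) with hδdef
  have hδpos : 0 < δ := by
    apply lt_min (by positivity) (lt_min (by positivity) (by linarith))
  have hδ1 : t + δ < 1 := by
    have h2 : δ ≤ (1-t)/2 := le_trans (min_le_right _ _) (min_le_right _ _)
    linarith
  have hδ2 : 0 < t - δ := by
    have h2 : δ ≤ t/2 := le_trans (min_le_right _ _) (min_le_left _ _)
    linarith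
  have hup : qf μ f g (t+δ) ≤ M + ε'/2 := by
    have := hδ₀c (x := t + δ) (by
      rw [Real.dist_eq]
      have : δ ≤ δ₀/2 := min_le_left _ _
      rw [abs_of_nonneg (by linarith : (0:ℝ) ≤ t + δ - t)]
      linarith)
    rw [Real.dist_eq] at this
    have := (abs_lt.1 this).2
    linarith
  have hdown : M - ε'/2 ≤ qf μ f g (t-δ) := by
    have := hδ₀c (x := t - δ) (by
      rw [Real.dist_eq]
      have : δ ≤ δ₀/2 := min_le_left _ _
      rw [abs_of_nonpos (by linarith : t - δ - t ≤ 0)]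
      linarith)
    rw [Real.dist_eq] at this
    have := (abs_lt.1 this).1
    linarith
  clear_value δ
  -- choose η
  set η := min (1/2) (min (δ/5) (ε'/(8*(M+ε')))) with hηdef
  have hη0 : 0 < η := by
    apply lt_min (by norm_num) (lt_min (by positivity) (by positivity))
  have hη12 : η ≤ 1/2 := min_le_left _ _
  have hη1 : η < 1 := by linarith
  have hηδ : 5 * η ≤ δ := by
    have : η ≤ δ/5 := le_trans (min_le_right _ _) (min_le_left _ _)
    linarith
  have hηε : 8 * η * (M + ε') ≤ ε' := by
    have h : η ≤ ε'/(8*(M+ε')) := le_trans (min_le_right _ _) (min_le_right _ _)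
    have hpos : (0:ℝ) < 8*(M+ε') := by positivity
    calc 8 * η * (M + ε') ≤ 8 * (ε'/(8*(M+ε'))) * (M + ε') := by nlinarith
      _ = ε' := by field_simp
  clear_value η
  set θ := (1+η)/(1-η) with hθdef
  have hθ1 : 1 ≤ θ := by
    rw [le_div_iff₀ (by linarith)]; linarith
  have hθ0 : 0 < θ := by linarith
  have hθ4 : θ ≤ 1 + 4*η := by
    rw [div_le_iff₀ (by linarith)]; nlinarith
  clear_value θ
  -- eventual smallness of the bad-set integrals
  have hBfg : Tendsto (fun i => ∫ x in {x | η < |fi i x / f x - 1|}, g x ∂μ) atTop (𝓝 0) :=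
    tendsto_setIntegral_zero_of_ac hfmeas hgmeas hfpos (hgpos.mono fun x h => h.le)
      (integrable_one f hfint) (integrable_one g hgint)
      (fun i => badset_meas hfmeas (hfimeas i)) (hfconv η hη0)
  have hBgg : Tendsto (fun i => ∫ x in {x | η < |gi i x / g x - 1|}, g x ∂μ) atTop (𝓝 0) :=
    hgconv η hη0
  filter_upwards [hBfg.eventually (eventually_lt_nhds (show (0:ℝ) < η/2 by positivity)),
    hBgg.eventually (eventually_lt_nhds (show (0:ℝ) < η/2 by positivity))] with i hi1 hi2
  -- bad set bounds for this i
  have hδi : ∫ x in ({x | η < |fi i x / f x - 1|} ∪ {x | η < |gi i x / g x - 1|}), g x ∂μ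
      ≤ η := by
    have := setIntegral_union_le (A := {x | η < |fi i x / f x - 1|})
      (B := {x | η < |gi i x / g x - 1|}) (badset_meas hfmeas (hfimeas i))
      (badset_meas hgmeas (hgimeas i)) (integrable_one g hgint)
      (hgpos.mono fun x h => h.le)
    linarith
  have hδi0 : 0 ≤ ∫ x in ({x | η < |fi i x / f x - 1|} ∪ {x | η < |gi i x / g x - 1|}), g x ∂μ :=
    setIntegral_nonneg_of_ae_restrict (ae_restrict_of_ae (hgpos.mono fun x h => h.le))
  have hβi : ∫ x in ({x | η < |fi i x / f x - 1|} ∪ {x | η < |gi i x / g x - 1|}), gi i x ∂μ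
      ≤ 4*η := by
    have := beta_bound (μ := μ) hη0 hη1 hfmeas hgmeas (hfimeas i) (hgimeas i)
      hgpos (hgipos i) hgint (hgiint i)
    nlinarith
  -- cdf sandwich for this i
  have hupper : ∀ r, cdf μ (fi i) (gi i) r ≤ cdf μ f g (θ*r) + 5*η := by
    intro r
    have hs := sandwich_upper (μ := μ) hη0 hη1 hfmeas hgmeas (hfimeas i) (hgimeas i)
      hfpos hgpos (hfipos i) (hgipos i) hgint (hgiint i) r
    rw [← hθdef] at hs
    have h1 := cdf_le_one (μ := μ) (f := f) hgpos hgint (θ*r)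
    have h2 := cdf_nonneg (μ := μ) (f := f) hgpos (θ*r)
    nlinarith [mul_le_mul_of_nonneg_left h1 hη0.le]
  have hlower : ∀ r, cdf μ f g ((1-η)/(1+η)*r) ≤ cdf μ (fi i) (gi i) r + 2*η := by
    intro r
    have hs := sandwich_lower (μ := μ) hη0 hη1 hfmeas hgmeas (hfimeas i) (hgimeas i)
      hfpos hgpos (hfipos i) (hgipos i) hgint (hgiint i) r
    have h1 := cdf_le_one (μ := μ) (f := f) hgpos hgint ((1-η)/(1+η)*r)
    have h2 := cdf_nonneg (μ := μ) (f := f) hgpos ((1-η)/(1+η)*r)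
    nlinarith [mul_le_mul_of_nonneg_left h1 hη0.le, mul_nonneg hη0.le hδi0]
  have hq1 : 0 ≤ qf μ f g (t+δ) :=
    qf_nonneg hfmeas hgmeas hfpos hgpos hgint (by linarith) hδ1
  have hq2 : 0 ≤ qf μ f g (t-δ) :=
    qf_nonneg hfmeas hgmeas hfpos hgpos hgint hδ2 (by linarith)
  have hci0 : 0 ≤ qf μ (fi i) (gi i) t :=
    qf_nonneg (hfimeas i) (hgimeas i) (hfipos i) (hgipos i) (hgiint i) ht0 ht1
  -- upper bound on the approximate quantile
  have hub : qf μ (fi i) (gi i) t ≤ θ * qf μ f g (t+δ) := by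
    apply qf_le _ (mul_nonneg hθ0.le hq1)
    intro r hr
    have h1 : cdf μ f g ((1-η)/(1+η)*r) < t + δ := by
      have := hlower r
      have := hr.2
      linarith
    have hmem : (1-η)/(1+η)*r ∈ qset μ f g (t+δ) :=
      ⟨mul_nonneg (div_nonneg (by linarith) (by linarith)) hr.1, h1⟩
    have hle := mem_le_qf hfmeas hgmeas hgpos hgint hδ1 hmem
    rw [div_mul_eq_mul_div, div_le_iff₀ (by linarith : (0:ℝ) < 1+η)] at hle
    rw [hθdef, div_mul_eq_mul_div, le_div_iff₀ (by linarith : (0:ℝ) < 1-η)]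
    nlinarith
  have hub2 : qf μ (fi i) (gi i) t ≤ M + ε' := by
    have h1 : θ * qf μ f g (t+δ) ≤ θ * (M + ε'/2) := mul_le_mul_of_nonneg_left hup hθ0.le
    nlinarith
  -- lower bound on the approximate quantile
  have hlb : qf μ f g (t-δ) ≤ θ * qf μ (fi i) (gi i) t := by
    apply qf_le _ (mul_nonneg hθ0.le hci0)
    intro r hr
    have hrr : θ * ((1-η)/(1+η)*r) = r := by
      have hne1 : (1-η) ≠ 0 := ne_of_gt (by linarith)
      have hne2 : (1+η) ≠ 0 := ne_of_gt (by linarith)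
      rw [hθdef]
      field_simp
      try ring
    have h1 : cdf μ (fi i) (gi i) ((1-η)/(1+η)*r) < t := by
      have h2 := hupper ((1-η)/(1+η)*r)
      rw [hrr] at h2
      have := hr.2
      linarith
    have hmem : (1-η)/(1+η)*r ∈ qset μ (fi i) (gi i) t :=
      ⟨mul_nonneg (div_nonneg (by linarith) (by linarith)) hr.1, h1⟩
    have hle := mem_le_qf (hfimeas i) (hgimeas i) (hgipos i) (hgiint i) ht1 hmem
    rw [div_mul_eq_mul_div, div_le_iff₀ (by linarith : (0:ℝ) < 1+η)] at hle
    rw [hθdef, div_mul_eq_mul_div, le_div_iff₀ (by linarith : (0:ℝ) < 1-η)]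
    nlinarith
  have hlb2 : M - ε' ≤ qf μ (fi i) (gi i) t := by
    rcases le_or_gt M ε' with hc | hc
    · linarith
    · -- θ (M - ε') ≤ M - ε'/2 ≤ qf(t-δ) ≤ θ ci
      have h1 : θ * (M - ε') ≤ M - ε'/2 := by nlinarith
      have h2 : θ * (M - ε') ≤ θ * qf μ (fi i) (gi i) t := by linarith
      exact le_of_mul_le_mul_left h2 hθ0
  rw [Real.dist_eq]
  have : |qf μ (fi i) (gi i) t - M| ≤ ε' :=
    abs_le.2 ⟨by linarith, by linarith⟩
  linarith

end LRQ
namespace LRQ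

variable {Ω : Type*} [MeasurableSpace Ω] {μ : Measure Ω}

/-- Except for countably many `t ∈ (0,1)`, the quantile function is continuous at `t`. -/
lemma qf_ae_continuousAt {f g : Ω → ℝ}
    (hfmeas : Measurable f) (hgmeas : Measurable g)
    (hfpos : ∀ᵐ x ∂μ, 0 < f x) (hgpos : ∀ᵐ x ∂μ, 0 < g x) (hgint : ∫ x, g x ∂μ = 1) :
    ∃ D : Set ℝ, D.Countable ∧ ∀ t ∈ Ioo (0:ℝ) 1, t ∉ D → ContinuousAt (qf μ f g) t := by
  set c := qf μ f g with hcdef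
  have hmono := qf_monoOn hfmeas hgmeas hfpos hgpos hgint (μ := μ)
  set e : ℝ → ℝ := fun t => if t < 1 then (if 0 < t then Real.arctan (c t) else -2) else 2
    with hedef
  have hπ : Real.pi ≤ 4 := Real.pi_le_four
  have harc_lt : ∀ y : ℝ, Real.arctan y < 2 :=
    fun y => lt_of_lt_of_le (Real.arctan_lt_pi_div_two y) (by linarith)
  have harc_gt : ∀ y : ℝ, (-2:ℝ) < Real.arctan y :=
    fun y => lt_of_le_of_lt (by linarith) (Real.neg_pi_div_two_lt_arctan y)
  have hemono : Monotone e := by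
    intro s u hsu
    by_cases hu1 : u < 1
    · have hs1 : s < 1 := lt_of_le_of_lt hsu hu1
      by_cases hu0 : 0 < u
      · by_cases hs0 : 0 < s
        · simp only [hedef, if_pos hu1, if_pos hs1, if_pos hu0, if_pos hs0]
          exact Real.arctan_strictMono.monotone (hmono ⟨hs0, hs1⟩ ⟨hu0, hu1⟩ hsu)
        · simp only [hedef, if_pos hu1, if_pos hs1, if_pos hu0, if_neg hs0]
          exact (harc_gt _).le
      · have hs0 : ¬ 0 < s := fun h => hu0 (lt_of_lt_of_le h hsu)
        simp [hedef, if_pos hu1, if_pos hs1, if_neg hu0, if_neg hs0]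
    · simp only [hedef, if_neg hu1]
      by_cases hs1 : s < 1
      · by_cases hs0 : 0 < s
        · simp only [if_pos hs1, if_pos hs0]; exact (harc_lt _).le
        · simp only [if_pos hs1, if_neg hs0]; norm_num
      · simp [if_neg hs1]
  refine ⟨{t | ¬ ContinuousAt e t}, hemono.countable_not_continuousAt, ?_⟩
  intro t ht htD
  have hce : ContinuousAt e t := not_not.1 htD
  have heq : e =ᶠ[𝓝 t] fun s => Real.arctan (c s) := by
    filter_upwards [Ioo_mem_nhds ht.1 ht.2] with s hs
    simp [hedef, if_pos hs.2, if_pos hs.1]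
  have hac : ContinuousAt (fun s => Real.arctan (c s)) t := hce.congr heq
  have htan : ContinuousAt (Real.tan ∘ fun s => Real.arctan (c s)) t := by
    apply ContinuousAt.comp ?_ hac
    apply Real.continuousOn_tan.continuousAt
    refine IsOpen.mem_nhds ?_ (Real.cos_arctan_pos _).ne'
    have : {x : ℝ | Real.cos x ≠ 0} = Real.cos ⁻¹' ({0}ᶜ) := rfl
    rw [this]
    exact isOpen_compl_singleton.preimage Real.continuous_cos
  have : ContinuousAt c t := by
    have hfun : (Real.tan ∘ fun s => Real.arctan (c s)) = c := by
      funext s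
      simp [Function.comp, Real.tan_arctan]
    rwa [hfun] at htan
  exact this

end LRQ
/-- The likelihood-ratio quantile function `c[f,g]` of two probability densities with
respect to `μ`: `c[f,g](t) = sup { r ≥ 0 : ∫_{f/g < r} g dμ < t }`, with `sup ∅ = 0`. -/
noncomputable def lrq {Ω : Type*} [MeasurableSpace Ω] (μ : Measure Ω)
    (f g : Ω → ℝ) (t : ℝ) : ℝ :=
  sSup {r : ℝ | 0 ≤ r ∧ ∫ x in {x | f x / g x < r}, g x ∂μ < t}

/-- If the probability densities `f_i` and `g_i` ratio-converge in measure to `f` and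
`g`, then the likelihood-ratio quantile functions `c[f_i,g_i]` converge to `c[f,g]` in
Lebesgue measure on `(0,1)`. -/
theorem stmt5 {Ω : Type*} [MeasurableSpace Ω] (μ : Measure Ω) [SigmaFinite μ]
    (f g : Ω → ℝ) (fi gi : ℕ → Ω → ℝ)
    (hfmeas : Measurable f) (hfpos : ∀ᵐ x ∂μ, 0 < f x) (hfint : ∫ x, f x ∂μ = 1)
    (hgmeas : Measurable g) (hgpos : ∀ᵐ x ∂μ, 0 < g x) (hgint : ∫ x, g x ∂μ = 1)
    (hfimeas : ∀ i, Measurable (fi i)) (hfipos : ∀ i, ∀ᵐ x ∂μ, 0 < fi i x)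
    (hfiint : ∀ i, ∫ x, fi i x ∂μ = 1)
    (hgimeas : ∀ i, Measurable (gi i)) (hgipos : ∀ i, ∀ᵐ x ∂μ, 0 < gi i x)
    (hgiint : ∀ i, ∫ x, gi i x ∂μ = 1)
    (hfconv : ∀ ε > (0:ℝ),
      Tendsto (fun i => ∫ x in {x | ε < |fi i x / f x - 1|}, f x ∂μ) atTop (nhds 0))
    (hgconv : ∀ ε > (0:ℝ),
      Tendsto (fun i => ∫ x in {x | ε < |gi i x / g x - 1|}, g x ∂μ) atTop (nhds 0)) :
    ∀ ε > (0:ℝ),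
      Tendsto (fun i =>
          volume {t : ℝ | t ∈ Set.Ioo (0:ℝ) 1 ∧ ε < |lrq μ (fi i) (gi i) t - lrq μ f g t|})
        atTop (nhds 0) := by
  intro ε hε
  have hlrq : ∀ (F G : Ω → ℝ) (t : ℝ), lrq μ F G t = LRQ.qf μ F G t := fun F G t => rfl
  obtain ⟨D, hDc, hDcont⟩ := LRQ.qf_ae_continuousAt hfmeas hgmeas hfpos hgpos hgint
  haveI hfin : IsFiniteMeasure (volume.restrict (Set.Ioo (0:ℝ) 1)) := by
    constructor
    rw [Measure.restrict_apply_univ, Real.volume_Ioo]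
    exact ENNReal.ofReal_lt_top
  have hmeasi : ∀ i, AEStronglyMeasurable (fun t => LRQ.qf μ (fi i) (gi i) t)
      (volume.restrict (Set.Ioo (0:ℝ) 1)) := fun i =>
    (aemeasurable_restrict_of_monotoneOn measurableSet_Ioo
      (LRQ.qf_monoOn (hfimeas i) (hgimeas i) (hfipos i) (hgipos i)
        (hgiint i))).aestronglyMeasurable
  have hae : ∀ᵐ t ∂(volume.restrict (Set.Ioo (0:ℝ) 1)),
      Tendsto (fun i => LRQ.qf μ (fi i) (gi i) t) atTop (𝓝 (LRQ.qf μ f g t)) := by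
    have hD0 : volume D = 0 := hDc.measure_zero _
    rw [ae_restrict_iff' measurableSet_Ioo]
    filter_upwards [measure_eq_zero_iff_ae_notMem.1 hD0] with t htD ht
    exact LRQ.qf_tendsto hfmeas hfpos hfint hgmeas hgpos hgint hfimeas hfipos hfiint
      hgimeas hgipos hgiint hfconv hgconv ht (hDcont t ht htD)
  have htim := tendstoInMeasure_of_tendsto_ae hmeasi hae (ENNReal.ofReal ε) (ENNReal.ofReal_pos.2 hε)
  refine tendsto_of_tendsto_of_tendsto_of_le_of_le tendsto_const_nhds htim
    (fun i => zero_le) (fun i => ?_)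
  rw [Measure.restrict_apply' measurableSet_Ioo]
  apply measure_mono
  intro t ht2
  refine ⟨?_, ht2.1⟩
  show ENNReal.ofReal ε ≤ edist (LRQ.qf μ (fi i) (gi i) t) (LRQ.qf μ f g t)
  rw [edist_dist]
  apply ENNReal.ofReal_le_ofReal
  rw [Real.dist_eq, ← hlrq, ← hlrq]
  exact ht2.2.le
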